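/- Let (M, μ) be a measure space and let Ω : M × M → ℂ be jointly measurable and satisfy propagator conditions (1), (3), (4) and (5). Then: for every Ψ ∈ L²(M, μ) and every x ∈ M the function y ↦ Ψ(y)Ω(y,x) is μ-integrable; the formula (P_ΩΨ)(x) = ∫_M Ψ(y)Ω(y,x) dμ(y) defines a bounded linear operator P_Ω on L²(M, μ); and P_Ω is an orthogonal projection, i.e. P_Ω² = P_Ω and P_Ω* = P_Ω (so in particular ‖P_Ω‖ ≤ 1). -/

import Mathlib

open MeasureTheory

/-- Given a jointly measurable kernel `Ω` satisfying the propagator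
conditions (1), (3), (4), (5), for every `Ψ ∈ L²(M,μ)` and every `x` the function
`y ↦ Ψ(y)Ω(y,x)` is integrable, and the formula `(P_ΩΨ)(x) = ∫ Ψ(y)Ω(y,x) dμ(y)`
defines a bounded linear operator `P_Ω` on `L²(M,μ)` which is an orthogonal
projection: `P_Ω ∘ P_Ω = P_Ω` and `P_Ω* = P_Ω`; in particular `‖P_Ω‖ ≤ 1`. -/
theorem propagator_projection_exists
    {M : Type*} [MeasurableSpace M] (μ : Measure M)
    (Ω : M → M → ℂ)
    (hmeas : Measurable fun p : M × M => Ω p.1 p.2)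
    (h1 : ∀ x, Ω x x = 1)
    (h3 : ∀ x y, Ω x y = (starRingEnd ℂ) (Ω y x))
    (h4int : ∀ x y, Integrable (fun z => Ω x z * Ω z y) μ)
    (h4 : ∀ x y, ∫ z, Ω x z * Ω z y ∂μ = Ω x y)
    (h5 : ∃ C : ℝ, ∀ x, Integrable (fun y => ‖Ω x y‖) μ ∧ (∫ y, ‖Ω x y‖ ∂μ) ≤ C) :
    (∀ Ψ : Lp ℂ 2 μ, ∀ x, Integrable (fun y => Ψ y * Ω y x) μ) ∧
    ∃ P : Lp ℂ 2 μ →L[ℂ] Lp ℂ 2 μ,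
      (∀ Ψ : Lp ℂ 2 μ, ∀ᵐ x ∂μ, (P Ψ) x = ∫ y, Ψ y * Ω y x ∂μ) ∧
      P.comp P = P ∧ ContinuousLinearMap.adjoint P = P ∧ ‖P‖ ≤ 1 := by
  classical
  -- measurability of sections
  have hmx : ∀ x, Measurable (Ω x) := fun x => hmeas.comp (measurable_prodMk_left)
  -- pointwise identity : Ω x y * Ω y x = ‖Ω x y‖ ^ 2
  have habs : ∀ x y, Ω x y * Ω y x = ((‖Ω x y‖ ^ 2 : ℝ) : ℂ) := by
    intro x y
    rw [h3 y x, Complex.mul_conj, Complex.normSq_eq_norm_sq]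
  -- each section Ω x · is in L²
  have hK2 : ∀ x, MemLp (fun y => Ω x y) 2 μ := by
    intro x
    rw [memLp_two_iff_integrable_sq_norm (hmx x).aestronglyMeasurable]
    have h' : Integrable (fun z => ((‖Ω x z‖ ^ 2 : ℝ) : ℂ)) μ := by
      refine (h4int x x).congr (Filter.Eventually.of_forall fun z => (habs x z))
    have := h'.re
    refine this.congr (Filter.Eventually.of_forall fun z => ?_)
    simp [← Complex.ofReal_pow]
  -- the kernel sections as L² elements
  set KL : M → Lp ℂ 2 μ := fun x => (hK2 x).toLp (fun y => Ω x y) with hKL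
  have hKLcoe : ∀ x, (KL x : M → ℂ) =ᵐ[μ] fun y => Ω x y := fun x => (hK2 x).coeFn_toLp
  -- integrability of the integrand
  have hInt : ∀ (Ψ : Lp ℂ 2 μ) (x : M), Integrable (fun y => Ψ y * Ω y x) μ := by
    intro Ψ x
    have h0 : Integrable (fun y => (inner ℂ (KL x y) (Ψ y) : ℂ)) μ :=
      L2.integrable_inner (𝕜 := ℂ) (KL x) Ψ
    refine h0.congr ?_
    filter_upwards [hKLcoe x] with y hy
    rw [hy, RCLike.inner_apply, ← h3 y x, mul_comm]
  -- the inner product formula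
  have innr : ∀ (Ψ : Lp ℂ 2 μ) (x : M),
      (inner ℂ (KL x) Ψ : ℂ) = ∫ y, Ψ y * Ω y x ∂μ := by
    intro Ψ x
    rw [L2.inner_def]
    refine integral_congr_ae ?_
    filter_upwards [hKLcoe x] with y hy
    rw [hy, RCLike.inner_apply, ← h3 y x, mul_comm]
  refine ⟨hInt, ?_⟩
  -- the closed subspace spanned by the kernel sections
  set V : Submodule ℂ (Lp ℂ 2 μ) :=
    (Submodule.span ℂ (Set.range KL)).topologicalClosure with hV
  haveI : CompleteSpace V :=
    (Submodule.isClosed_topologicalClosure _).completeSpace_coe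
  have hKLmem : ∀ x, KL x ∈ V := fun x =>
    Submodule.le_topologicalClosure _ (Submodule.subset_span ⟨x, rfl⟩)
  -- reproducing property on the span
  have rep_span : ∀ Φ : Lp ℂ 2 μ, Φ ∈ Submodule.span ℂ (Set.range KL) →
      ∀ᵐ x ∂μ, (inner ℂ (KL x) Φ : ℂ) = Φ x := by
    intro Φ hΦ
    induction hΦ using Submodule.span_induction with
    | mem Φ hΦ =>
      obtain ⟨y, rfl⟩ := hΦ
      have hval : ∀ x, (inner ℂ (KL x) (KL y) : ℂ) = Ω y x := by
        intro x
        rw [innr]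
        have : (∫ z, (KL y) z * Ω z x ∂μ) = ∫ z, Ω y z * Ω z x ∂μ := by
          refine integral_congr_ae ?_
          filter_upwards [hKLcoe y] with z hz
          rw [hz]
        rw [this, h4 y x]
      filter_upwards [hKLcoe y] with x hx
      rw [hval x, hx]
    | zero =>
      filter_upwards [Lp.coeFn_zero ℂ 2 μ] with x hx
      rw [inner_zero_right, hx]; rfl
    | add Φ₁ Φ₂ h₁ h₂ ih₁ ih₂ =>
      filter_upwards [ih₁, ih₂, Lp.coeFn_add Φ₁ Φ₂] with x hx₁ hx₂ hadd
      rw [inner_add_right, hx₁, hx₂, hadd]; rfl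
    | smul a Φ₁ h₁ ih₁ =>
      filter_upwards [ih₁, Lp.coeFn_smul a Φ₁] with x hx₁ hsmul
      rw [inner_smul_right, hx₁, hsmul]; rfl
  -- reproducing property on the closure
  have rep : ∀ Φ : Lp ℂ 2 μ, Φ ∈ V →
      ∀ᵐ x ∂μ, (inner ℂ (KL x) Φ : ℂ) = Φ x := by
    intro Φ hΦ
    have hΦ' : Φ ∈ closure ((Submodule.span ℂ (Set.range KL) : Submodule ℂ _) :
        Set (Lp ℂ 2 μ)) := hΦ
    obtain ⟨u, hu_mem, hu_lim⟩ := mem_closure_iff_seq_limit.mp hΦ'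
    have hmeas' : TendstoInMeasure μ (fun n => (u n : M → ℂ)) Filter.atTop Φ :=
      tendstoInMeasure_of_tendsto_Lp hu_lim
    obtain ⟨k, hk_mono, hk_ae⟩ := hmeas'.exists_seq_tendsto_ae
    have h_all : ∀ᵐ x ∂μ, ∀ n, (inner ℂ (KL x) (u (k n)) : ℂ) = u (k n) x :=
      (MeasureTheory.ae_all_iff).2 fun n => rep_span _ (hu_mem (k n))
    filter_upwards [hk_ae, h_all] with x hx hall
    have h_inner_tendsto :
        Filter.Tendsto (fun n => (inner ℂ (KL x) (u (k n)) : ℂ)) Filter.atTop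
          (nhds (inner ℂ (KL x) Φ)) := by
      have hcont : Continuous fun v : Lp ℂ 2 μ => (inner ℂ (KL x) v : ℂ) :=
        Continuous.inner continuous_const continuous_id
      exact (hcont.tendsto Φ).comp (hu_lim.comp hk_mono.tendsto_atTop)
    have h_fun_tendsto :
        Filter.Tendsto (fun n => (inner ℂ (KL x) (u (k n)) : ℂ)) Filter.atTop
          (nhds (Φ x)) := by
      refine Filter.Tendsto.congr (fun n => (hall n).symm) hx
    exact tendsto_nhds_unique h_inner_tendsto h_fun_tendsto
  -- the projection
  refine ⟨V.subtypeL.comp (Submodule.orthogonalProjection V), ?_, ?_, ?_, ?_⟩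
  · intro Ψ
    have hmem : (V.subtypeL.comp (Submodule.orthogonalProjection V)) Ψ ∈ V := (Submodule.orthogonalProjection V Ψ).2
    have h1' := rep _ hmem
    have h2' : ∀ x, (inner ℂ (KL x) ((V.subtypeL.comp (Submodule.orthogonalProjection V)) Ψ) : ℂ)
        = inner ℂ (KL x) Ψ := by
      intro x
      have horth := Submodule.sub_starProjection_mem_orthogonal (K := V) Ψ
      have h0 : (inner ℂ (KL x) (Ψ - (Submodule.orthogonalProjection V Ψ : Lp ℂ 2 μ)) : ℂ) = 0 :=
        horth (KL x) (hKLmem x)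
      rw [inner_sub_right] at h0
      have : (inner ℂ (KL x) Ψ : ℂ) = inner ℂ (KL x) ((Submodule.orthogonalProjection V Ψ : Lp ℂ 2 μ)) :=
        sub_eq_zero.mp h0
      simpa using this.symm
    filter_upwards [h1'] with x hx
    rw [← hx, h2' x, innr]
  · refine ContinuousLinearMap.ext fun Ψ => ?_
    simp only [ContinuousLinearMap.comp_apply, Submodule.subtypeL_apply]
    exact congrArg _ (Submodule.orthogonalProjection_mem_subspace_eq_self _)
  · exact (isSelfAdjoint_starProjection V).adjoint_eq
  · refine ContinuousLinearMap.opNorm_le_bound _ zero_le_one fun Ψ => ?_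
    rw [one_mul]
    calc ‖(V.subtypeL.comp (Submodule.orthogonalProjection V)) Ψ‖
        = ‖Submodule.orthogonalProjection V Ψ‖ := rfl
      _ ≤ ‖(Submodule.orthogonalProjection V : Lp ℂ 2 μ →L[ℂ] V)‖ * ‖Ψ‖ :=
          (Submodule.orthogonalProjection V).le_opNorm Ψ
      _ ≤ 1 * ‖Ψ‖ := by
          gcongr; exact Submodule.orthogonalProjection_norm_le V
      _ = ‖Ψ‖ := one_mul _
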